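/- arXiv:2005.06813 — 7 statements merged into one kernel-verified Lean document; each statement's English description precedes it below -/
import Mathlib

section
/- Let (P, d) be a metric space and let H_P denote the combinatorial horoball over P. For points (x, m) and (y, n) in H_P with x ≠ y, the graph distance satisfies d_{H_P}((x,m),(y,n)) = min over k ≥ max(m, n) of (2k − m − n + ⌈2^{−k} d(x,y)⌉). Moreover: (a) if max(m,n) ≥ log₂(d(x,y)) then d_{H_P}((x,m),(y,n)) = |m − n| + 1; (b) if max(m,n) < log₂(d(x,y)) then d_{H_P}((x,m),(y,n)) = 2⌊log₂ d(x,y)⌋ − (m + n) + f, where 0 ≤ f ≤ 2. -/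
open SimpleGraph

/-- The Groves–Manning combinatorial horoball over a graph `G`: vertex set `V × ℕ`,
horizontal edges between `(x, m)` and `(y, m)` whenever `dist x y ≤ 2 ^ m`, and
vertical edges between `(x, m)` and `(x, m + 1)`. -/
def Horoball {V : Type*} (G : SimpleGraph V) : SimpleGraph (V × ℕ) where
  Adj p q :=
    (p.2 = q.2 ∧ p.1 ≠ q.1 ∧ G.dist p.1 q.1 ≤ 2 ^ p.2) ∨
    (p.1 = q.1 ∧ (p.2 = q.2 + 1 ∨ q.2 = p.2 + 1))
  symm := by
    constructor
    rintro ⟨x, m⟩ ⟨y, n⟩ (⟨h1, h2, h3⟩ | ⟨h1, h2⟩)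
    · exact Or.inl ⟨h1.symm, h2.symm, by simp only at h1 h3 ⊢; rw [SimpleGraph.dist_comm, ← h1]; exact h3⟩
    · exact Or.inr ⟨h1.symm, h2.symm⟩
  loopless := by
    constructor
    rintro ⟨x, m⟩ (⟨_, h, _⟩ | ⟨_, h | h⟩)
    · exact h rfl
    · omega
    · omega

section Aux
variable {V : Type*} {G : SimpleGraph V} {u v : V}

lemma existsPrefixWalk (p : G.Walk u v) (i : ℕ) :
    ∃ w : G.Walk u (p.getVert i), w.length ≤ i := by
  induction p generalizing i with
  | nil => exact ⟨SimpleGraph.Walk.nil.copy rfl (SimpleGraph.Walk.getVert_of_length_le _ (by simp)).symm, by simp⟩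
  | cons h q ih =>
    cases i with
    | zero => exact ⟨SimpleGraph.Walk.nil.copy rfl (SimpleGraph.Walk.getVert_zero _).symm, by simp⟩
    | succ i =>
      obtain ⟨w, hw⟩ := ih i
      exact ⟨(SimpleGraph.Walk.cons h w).copy rfl rfl, by simpa using hw⟩

lemma existsSuffixWalk (p : G.Walk u v) (i : ℕ) :
    ∃ w : G.Walk (p.getVert i) v, w.length ≤ p.length - i := by
  induction p generalizing i with
  | nil => exact ⟨SimpleGraph.Walk.nil.copy (SimpleGraph.Walk.getVert_of_length_le _ (by simp)).symm rfl, by simp⟩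
  | cons h q ih =>
    cases i with
    | zero =>
      exact ⟨(SimpleGraph.Walk.cons h q).copy (SimpleGraph.Walk.getVert_zero _).symm rfl, by simp⟩
    | succ i =>
      obtain ⟨w, hw⟩ := ih i
      refine ⟨w.copy rfl rfl, ?_⟩
      simp only [SimpleGraph.Walk.length_copy, SimpleGraph.Walk.length_cons]
      exact le_trans (le_of_eq (SimpleGraph.Walk.length_copy _ _ _)) (by omega)

lemma vertWalk (G : SimpleGraph V) (x : V) (m k : ℕ) (h : m ≤ k) :
    ∃ w : (Horoball G).Walk (x, m) (x, k), w.length = k - m := by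
  obtain ⟨d, rfl⟩ := Nat.exists_eq_add_of_le h
  clear h
  induction d with
  | zero => exact ⟨SimpleGraph.Walk.nil, by simp⟩
  | succ d ih =>
    obtain ⟨w, hw⟩ := ih
    refine ⟨w.concat (show (Horoball G).Adj (x, m + d) (x, m + (d + 1)) from Or.inr ⟨rfl, Or.inr rfl⟩), ?_⟩
    rw [SimpleGraph.Walk.length_concat]; omega

lemma horizWalk (hG : G.Connected) (k : ℕ) :
    ∀ D : ℕ, ∀ a b : V, G.dist a b = D → 1 ≤ D →
      ∃ w : (Horoball G).Walk (a, k) (b, k), w.length ≤ ⌈((D : ℚ) / 2 ^ k)⌉₊ := by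
  intro D
  induction D using Nat.strong_induction_on with
  | _ D ih =>
    intro a b hab hD
    have hpos : (0 : ℚ) < 2 ^ k := by positivity
    by_cases hsmall : D ≤ 2 ^ k
    · have hne : a ≠ b := by
        rintro rfl; rw [SimpleGraph.dist_self] at hab; omega
      have hadj : (Horoball G).Adj (a, k) (b, k) :=
        Or.inl ⟨rfl, hne, by simp only; rw [hab]; exact hsmall⟩
      refine ⟨SimpleGraph.Walk.cons hadj SimpleGraph.Walk.nil, ?_⟩
      have : (0 : ℚ) < (D : ℚ) / 2 ^ k := by
        apply div_pos _ hpos; exact_mod_cast hD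
      simpa using Nat.ceil_pos.mpr this
    · push_neg at hsmall
      obtain ⟨p, hp⟩ := SimpleGraph.exists_walk_of_dist_ne_zero (u := a) (v := b)
        (by rw [hab]; omega)
      obtain ⟨z, hz⟩ : ∃ z, z = p.getVert (2 ^ k) := ⟨_, rfl⟩
      have d1 : G.dist a z ≤ 2 ^ k := by
        obtain ⟨w, hw⟩ := existsPrefixWalk p (2 ^ k)
        rw [hz]
        exact le_trans (SimpleGraph.dist_le w) hw
      have d2 : G.dist z b ≤ D - 2 ^ k := by
        obtain ⟨w, hw⟩ := existsSuffixWalk p (2 ^ k)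
        rw [hp, hab] at hw
        rw [hz]
        exact le_trans (SimpleGraph.dist_le w) hw
      have h2k : 1 ≤ 2 ^ k := Nat.one_le_two_pow
      have tri : D ≤ G.dist a z + G.dist z b := by rw [← hab]; exact hG.dist_triangle
      have hz1 : 1 ≤ G.dist a z := by omega
      have hzb : 1 ≤ G.dist z b := by omega
      have hane : a ≠ z := by
        rintro rfl; rw [SimpleGraph.dist_self] at hz1; omega
      obtain ⟨w', hw'⟩ := ih (G.dist z b) (by omega) z b rfl hzb
      have hadj : (Horoball G).Adj (a, k) (z, k) := Or.inl ⟨rfl, hane, d1⟩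
      refine ⟨SimpleGraph.Walk.cons hadj w', ?_⟩
      rw [SimpleGraph.Walk.length_cons]
      have key : ⌈((G.dist z b : ℚ)) / 2 ^ k⌉₊ + 1 ≤ ⌈((D : ℚ) / 2 ^ k)⌉₊ := by
        rw [← Nat.ceil_add_one (by positivity)]
        apply Nat.ceil_le_ceil
        have hle : ((G.dist z b + 2 ^ k : ℕ) : ℚ) ≤ (D : ℚ) := by exact_mod_cast (by omega : G.dist z b + 2 ^ k ≤ D)
        push_cast at hle
        rw [div_add' _ _ _ (ne_of_gt hpos), div_le_div_iff_of_pos_right hpos]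
        linarith
      omega

lemma lbWalk (hG : G.Connected) :
    ∀ {p q : V × ℕ} (w : (Horoball G).Walk p q),
    ∃ h t T : ℕ, w.length = h + t ∧ p.2 ≤ T ∧ q.2 ≤ T ∧
      G.dist p.1 q.1 ≤ h * 2 ^ T ∧ (T - p.2) + (T - q.2) ≤ t := by
  intro p q w
  induction w with
  | nil => exact ⟨0, 0, _, by simp, le_rfl, le_rfl, by simp, by omega⟩
  | @cons a r c hadj w ih =>
    obtain ⟨h', t', T', hlen, hr, hq, hdist, ht⟩ := ih
    have hadj' := hadj
    rcases hadj' with ⟨he, hne, hd⟩ | ⟨he, hud⟩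
    · refine ⟨h' + 1, t', max a.2 T', by simp [hlen]; omega, le_max_left _ _,
        le_trans hq (le_max_right _ _), ?_, ?_⟩
      · have pow1 : (2:ℕ) ^ a.2 ≤ 2 ^ max a.2 T' := Nat.pow_le_pow_right (by norm_num) (le_max_left _ _)
        have pow2 : (2:ℕ) ^ T' ≤ 2 ^ max a.2 T' := Nat.pow_le_pow_right (by norm_num) (le_max_right _ _)
        calc G.dist a.1 c.1 ≤ G.dist a.1 r.1 + G.dist r.1 c.1 := hG.dist_triangle
          _ ≤ 2 ^ a.2 + h' * 2 ^ T' := Nat.add_le_add hd hdist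
          _ ≤ 2 ^ max a.2 T' + h' * 2 ^ max a.2 T' :=
              Nat.add_le_add pow1 (Nat.mul_le_mul_left h' pow2)
          _ = (h' + 1) * 2 ^ max a.2 T' := by ring
      · omega
    · refine ⟨h', t' + 1, max a.2 T', by simp [hlen]; omega, le_max_left _ _,
        le_trans hq (le_max_right _ _), ?_, ?_⟩
      · have pow2 : (2:ℕ) ^ T' ≤ 2 ^ max a.2 T' := Nat.pow_le_pow_right (by norm_num) (le_max_right _ _)
        rw [he]
        exact le_trans hdist (Nat.mul_le_mul_left h' pow2)
      · omega

lemma twoMulLeTwoPow {t : ℕ} (ht : 1 ≤ t) : 2 * t ≤ 2 ^ t := by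
  obtain ⟨s, rfl⟩ := Nat.exists_eq_add_of_le ht
  have h := Nat.lt_two_pow_self (n := s)
  have h2 : 2 ^ (1 + s) = 2 * 2 ^ s := by rw [pow_add, pow_one]
  rw [h2]
  omega

end Aux

/-- Distance formula in the combinatorial horoball (Fact on horoball distances):
the exact minimization formula, together with the two regimes (a) and (b). -/
theorem horoball_dist_formula {V : Type*} (G : SimpleGraph V) (hG : G.Connected)
    (x y : V) (hxy : x ≠ y) (m n : ℕ) :
    ((Horoball G).dist (x, m) (y, n) =
      sInf {v : ℕ | ∃ k : ℕ, max m n ≤ k ∧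
        v = 2 * k - (m + n) + ⌈((G.dist x y : ℚ) / 2 ^ k)⌉₊}) ∧
    ((Real.logb 2 (G.dist x y) ≤ (max m n : ℝ)) →
      (((Horoball G).dist (x, m) (y, n) : ℤ) = |(m : ℤ) - (n : ℤ)| + 1)) ∧
    (((max m n : ℝ) < Real.logb 2 (G.dist x y)) →
      ∃ f : ℤ, 0 ≤ f ∧ f ≤ 2 ∧
        (((Horoball G).dist (x, m) (y, n) : ℤ) =
          2 * (Nat.log 2 (G.dist x y) : ℤ) - ((m : ℤ) + (n : ℤ)) + f)) := by
  set D := G.dist x y with hDdef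
  have hD1 : 1 ≤ D := hG.pos_dist_of_ne hxy
  set S : Set ℕ := {v : ℕ | ∃ k : ℕ, max m n ≤ k ∧
      v = 2 * k - (m + n) + ⌈((D : ℚ) / 2 ^ k)⌉₊} with hSdef
  -- upper bound for every admissible k
  have UB : ∀ k, max m n ≤ k →
      (Horoball G).dist (x, m) (y, n) ≤ 2 * k - (m + n) + ⌈((D : ℚ) / 2 ^ k)⌉₊ := by
    intro k hk
    obtain ⟨w1, hw1⟩ := vertWalk G x m k (by omega)
    obtain ⟨w2, hw2⟩ := horizWalk hG k D x y rfl hD1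
    obtain ⟨w3, hw3⟩ := vertWalk G y n k (by omega)
    have hlen := SimpleGraph.dist_le (w1.append (w2.append w3.reverse))
    simp only [SimpleGraph.Walk.length_append, SimpleGraph.Walk.length_reverse] at hlen
    have hm : m ≤ k := by omega
    have hn : n ≤ k := by omega
    omega
  have hSne : S.Nonempty := ⟨2 * (max m n) - (m + n) + ⌈((D : ℚ) / 2 ^ (max m n))⌉₊,
    ⟨max m n, le_rfl, rfl⟩⟩
  have hreach : (Horoball G).Reachable (x, m) (y, n) := by
    obtain ⟨w1, _⟩ := vertWalk G x m (max m n) (le_max_left _ _)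
    obtain ⟨w2, _⟩ := horizWalk hG (max m n) D x y rfl hD1
    obtain ⟨w3, _⟩ := vertWalk G y n (max m n) (le_max_right _ _)
    exact ⟨w1.append (w2.append w3.reverse)⟩
  -- the main distance identity
  have hdist_eq : (Horoball G).dist (x, m) (y, n) = sInf S := by
    apply le_antisymm
    · obtain ⟨k, hk, hv⟩ := Nat.sInf_mem hSne
      rw [hv]
      exact UB k hk
    · obtain ⟨w, hw⟩ := hreach.exists_walk_length_eq_dist
      obtain ⟨h, t, T, hlen, hmT, hnT, hd, ht⟩ := lbWalk hG w
      simp only at hmT hnT hd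
      have hceil : ⌈((D : ℚ) / 2 ^ T)⌉₊ ≤ h := by
        rw [Nat.ceil_le, div_le_iff₀ (by positivity)]
        exact_mod_cast hd
      have hmem : 2 * T - (m + n) + ⌈((D : ℚ) / 2 ^ T)⌉₊ ∈ S := ⟨T, by omega, rfl⟩
      calc sInf S ≤ 2 * T - (m + n) + ⌈((D : ℚ) / 2 ^ T)⌉₊ := Nat.sInf_le hmem
        _ ≤ h + t := by omega
        _ = (Horoball G).dist (x, m) (y, n) := by rw [← hw, hlen]
  refine ⟨hdist_eq, ?_, ?_⟩
  · -- case (a)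
    intro hlog
    have hD0 : (0 : ℝ) < D := by exact_mod_cast hD1
    have hDle : D ≤ 2 ^ (max m n) := by
      rw [← Nat.cast_max] at hlog
      have h1 := (Real.logb_le_iff_le_rpow (by norm_num) hD0).mp hlog
      rw [Real.rpow_natCast] at h1
      exact_mod_cast h1
    have hceil1 : ⌈((D : ℚ) / 2 ^ (max m n))⌉₊ = 1 := by
      apply le_antisymm
      · rw [Nat.ceil_le, Nat.cast_one, div_le_one (by positivity)]
        exact_mod_cast hDle
      · exact Nat.ceil_pos.mpr (by positivity)
    have hmemA : 2 * (max m n) - (m + n) + 1 ∈ S := ⟨max m n, le_rfl, by rw [hceil1]⟩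
    have hInfA : sInf S = 2 * (max m n) - (m + n) + 1 := by
      apply le_antisymm (Nat.sInf_le hmemA)
      obtain ⟨k, hk, hv⟩ := Nat.sInf_mem hSne
      have : 1 ≤ ⌈((D : ℚ) / 2 ^ k)⌉₊ := Nat.ceil_pos.mpr (by positivity)
      omega
    rw [hdist_eq, hInfA]
    rcases le_total m n with h | h
    · rw [abs_of_nonpos (by omega)]
      push_cast; omega
    · rw [abs_of_nonneg (by omega)]
      push_cast; omega
  · -- case (b)
    intro hlog
    have hD0 : (0 : ℝ) < D := by exact_mod_cast hD1
    have hDgt : 2 ^ (max m n) < D := by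
      rw [← Nat.cast_max] at hlog
      have h1 := (Real.lt_logb_iff_rpow_lt (by norm_num) hD0).mp hlog
      rw [Real.rpow_natCast] at h1
      exact_mod_cast h1
    set L := Nat.log 2 D with hLdef
    have hL1 : 2 ^ L ≤ D := Nat.pow_log_le_self 2 (by omega)
    have hL2 : D < 2 ^ (L + 1) := Nat.lt_pow_succ_log_self (by norm_num) D
    have hmaxL : max m n ≤ L := by
      by_contra hc
      push_neg at hc
      have := Nat.pow_le_pow_right (by norm_num : 1 ≤ 2) hc
      omega
    -- upper bound: dist ≤ 2L - (m+n) + 2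
    have hub : (Horoball G).dist (x, m) (y, n) ≤ 2 * L - (m + n) + 2 := by
      have hceil2 : ⌈((D : ℚ) / 2 ^ L)⌉₊ ≤ 2 := by
        rw [Nat.ceil_le, div_le_iff₀ (by positivity)]
        have : (D : ℚ) ≤ ((2 ^ (L + 1) : ℕ) : ℚ) := by exact_mod_cast hL2.le
        push_cast at this
        rw [pow_succ] at this
        push_cast
        linarith
      have := UB L hmaxL
      omega
    -- lower bound: 2L - (m+n) ≤ dist
    have hlb : 2 * L - (m + n) ≤ (Horoball G).dist (x, m) (y, n) := by
      rw [hdist_eq]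
      obtain ⟨k, hk, hv⟩ := Nat.sInf_mem hSne
      rw [hv]
      rcases le_or_gt L k with hLk | hkL
      · have : 1 ≤ ⌈((D : ℚ) / 2 ^ k)⌉₊ := Nat.ceil_pos.mpr (by positivity)
        omega
      · have hkey : 2 ^ (L - k) ≤ ⌈((D : ℚ) / 2 ^ k)⌉₊ := by
          have h1 : ((2 ^ (L - k) : ℕ) : ℚ) ≤ (D : ℚ) / 2 ^ k := by
            rw [le_div_iff₀ (by positivity)]
            have : ((2 ^ (L - k) : ℕ) : ℚ) * ((2 ^ k : ℕ) : ℚ) = ((2 ^ L : ℕ) : ℚ) := by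
              push_cast
              rw [← pow_add]
              congr 1
              omega
            rw [show ((2:ℚ) ^ k) = ((2 ^ k : ℕ) : ℚ) by push_cast; ring, this]
            exact_mod_cast hL1
          calc (2 ^ (L - k) : ℕ) = ⌈((2 ^ (L - k) : ℕ) : ℚ)⌉₊ := by rw [Nat.ceil_natCast]
            _ ≤ ⌈((D : ℚ) / 2 ^ k)⌉₊ := Nat.ceil_le_ceil h1
        have hpow : 2 * (L - k) ≤ 2 ^ (L - k) := twoMulLeTwoPow (by omega)
        omega
    have hmL : m ≤ L := by omega
    have hnL : n ≤ L := by omega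
    refine ⟨((Horoball G).dist (x, m) (y, n) : ℤ) - (2 * L - (m + n)), by omega, by omega, by ring⟩
end

section
/- Let (P, d) be a graph with path metric and H_P its combinatorial horoball. There is a universal constant C such that for all points (x, m), (y, n) in H_P, |d_{H_P}((x,m),(y,n)) − max(|m − n|, 2·log₂(1 + d(x, y)) − (m + n))| ≤ C. -/
open SimpleGraph Finset

/-! ### Auxiliary arithmetic lemmas -/

lemma hb_geom_le (a t : ℕ) : ∑ i ∈ Finset.range t, 2 ^ (a + i) ≤ 2 ^ (a + t) := by
  induction t with
  | zero => simp
  | succ t ih =>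
    rw [Finset.sum_range_succ]
    have : 2 ^ (a + (t + 1)) = 2 ^ (a + t) + 2 ^ (a + t) := by ring
    omega

lemma hb_sum_ite_lt_le (g : ℕ → ℕ) (t L : ℕ) :
    (∑ i ∈ Finset.range L, if i < t then g i else 0) ≤ ∑ i ∈ Finset.range t, g i := by
  rw [← Finset.sum_filter]
  apply Finset.sum_le_sum_of_subset
  intro i hi
  simp only [Finset.mem_filter, Finset.mem_range] at hi ⊢
  exact hi.2

lemma hb_claimB (a b L : ℕ) :
    ∑ i ∈ Finset.range L, 2 ^ (min (a + i) (b + (L - 1 - i))) ≤ 2 ^ ((a + b + L - 1) / 2 + 2) := by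
  rcases Nat.eq_zero_or_pos L with rfl | hL
  · simp
  set h := (a + b + L - 1) / 2 with hh
  set t := h + 1 - a with ht
  have key : ∀ i ∈ Finset.range L,
      2 ^ (min (a + i) (b + (L - 1 - i))) ≤
        (if i < t then 2 ^ (a + i) else 0) +
        (if i < t then 0 else 2 ^ (b + (L - 1 - i))) := by
    intro i _
    by_cases hc : i < t
    · simp only [hc, if_true, add_zero]
      exact Nat.pow_le_pow_right (by norm_num) (min_le_left _ _)
    · simp only [hc, if_false, zero_add]
      exact Nat.pow_le_pow_right (by norm_num) (min_le_right _ _)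
  have hsplit : ∑ i ∈ Finset.range L, 2 ^ (min (a + i) (b + (L - 1 - i))) ≤
      (∑ i ∈ Finset.range L, if i < t then 2 ^ (a + i) else 0) +
      (∑ i ∈ Finset.range L, if i < t then 0 else 2 ^ (b + (L - 1 - i))) := by
    rw [← Finset.sum_add_distrib]
    exact Finset.sum_le_sum key
  have h1 : (∑ i ∈ Finset.range L, if i < t then 2 ^ (a + i) else 0) ≤ 2 ^ (h + 1) := by
    refine (hb_sum_ite_lt_le _ t L).trans ?_
    rcases le_or_gt a (h + 1) with hc | hc
    · exact (hb_geom_le a t).trans (Nat.pow_le_pow_right (by norm_num) (by omega))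
    · have : t = 0 := by omega
      simp [this]
  have h2 : (∑ i ∈ Finset.range L, if i < t then 0 else 2 ^ (b + (L - 1 - i))) ≤ 2 ^ (h + 1) := by
    have hrefl : (∑ i ∈ Finset.range L, if i < t then 0 else 2 ^ (b + (L - 1 - i))) =
        ∑ i ∈ Finset.range L, if i < L - t then 2 ^ (b + i) else 0 := by
      rw [← Finset.sum_range_reflect]
      refine Finset.sum_congr rfl ?_
      intro i hi
      simp only [Finset.mem_range] at hi
      have e1 : L - 1 - (L - 1 - i) = i := by omega
      rw [e1]
      by_cases hc : i < L - t
      · rw [if_pos hc, if_neg (by omega)]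
      · rw [if_neg hc, if_pos (by omega)]
    rw [hrefl]
    refine (hb_sum_ite_lt_le _ (L - t) L).trans ?_
    rcases le_or_gt L t with hc | hc
    · have : L - t = 0 := by omega
      simp [this]
    · refine (hb_geom_le b (L - t)).trans (Nat.pow_le_pow_right (by norm_num) ?_)
      rw [ht, hh] at hc ⊢
      omega
  calc ∑ i ∈ Finset.range L, 2 ^ (min (a + i) (b + (L - 1 - i)))
      ≤ 2 ^ (h + 1) + 2 ^ (h + 1) := hsplit.trans (add_le_add h1 h2)
    _ = 2 ^ (h + 2) := by ring

/-! ### Walk lemmas for the horoball -/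

section aux
variable {V : Type} (G : SimpleGraph V)

lemma horoball_adj_snd {p q : V × ℕ} (h : (Horoball G).Adj p q) :
    q.2 ≤ p.2 + 1 ∧ p.2 ≤ q.2 + 1 := by
  rcases h with ⟨h1, -⟩ | ⟨-, h2 | h2⟩ <;> omega

lemma horoball_levels {p q : V × ℕ} (w : (Horoball G).Walk p q) :
    p.2 ≤ q.2 + w.length ∧ q.2 ≤ p.2 + w.length := by
  induction w with
  | nil => omega
  | cons h w ih =>
    have := horoball_adj_snd G h
    simp only [SimpleGraph.Walk.length_cons]
    omega

lemma horoball_vert_walk (x : V) (a k : ℕ) :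
    ∃ w : (Horoball G).Walk (x, a) (x, a + k), w.length = k := by
  induction k with
  | zero => exact ⟨SimpleGraph.Walk.nil, rfl⟩
  | succ k ih =>
    obtain ⟨w, hw⟩ := ih
    refine ⟨w.concat (show (Horoball G).Adj (x, a + k) (x, a + (k + 1)) from Or.inr ⟨rfl, Or.inr rfl⟩), ?_⟩
    rw [SimpleGraph.Walk.length_concat, hw]

lemma horoball_vert_walk' (x : V) (a b : ℕ) (hab : a ≤ b) :
    ∃ w : (Horoball G).Walk (x, a) (x, b), w.length = b - a := by
  obtain ⟨k, rfl⟩ := Nat.exists_eq_add_of_le hab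
  have := horoball_vert_walk G x a k
  simpa using this

/-- Lower-bound counting lemma: along a walk in the horoball, the horizontal
displacement at each step is bounded by an appropriate power of 2. -/
lemma horoball_walk_dist (hG : G.Connected) {p q : V × ℕ}
    (w : (Horoball G).Walk p q) :
    G.dist p.1 q.1 ≤
      ∑ i ∈ Finset.range w.length, 2 ^ (min (p.2 + i) (q.2 + (w.length - 1 - i))) := by
  induction w with
  | nil => simp
  | @cons p r q h w ih =>
    simp only [SimpleGraph.Walk.length_cons]
    set L := w.length with hL
    have hlev := (horoball_levels G w).1
    have hr2 : r.2 ≤ p.2 + 1 := (horoball_adj_snd G h).1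
    have h0 : G.dist p.1 r.1 ≤ 2 ^ (min (p.2 + 0) (q.2 + (L + 1 - 1 - 0))) := by
      rcases h with ⟨heq, hne, hd⟩ | ⟨heq, -⟩
      · have hm : min (p.2 + 0) (q.2 + (L + 1 - 1 - 0)) = p.2 := by omega
        rw [hm]; exact hd
      · rw [heq, SimpleGraph.dist_self]
        exact Nat.zero_le _
    have hsum : G.dist r.1 q.1 ≤
        ∑ i ∈ Finset.range L, 2 ^ (min (p.2 + (i + 1)) (q.2 + (L + 1 - 1 - (i + 1)))) := by
      refine ih.trans (Finset.sum_le_sum ?_)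
      intro i hi
      simp only [Finset.mem_range] at hi
      apply Nat.pow_le_pow_right (by norm_num)
      omega
    calc G.dist p.1 q.1 ≤ G.dist p.1 r.1 + G.dist r.1 q.1 := hG.dist_triangle
      _ ≤ 2 ^ (min (p.2 + 0) (q.2 + (L + 1 - 1 - 0))) +
          ∑ i ∈ Finset.range L, 2 ^ (min (p.2 + (i + 1)) (q.2 + (L + 1 - 1 - (i + 1)))) :=
        add_le_add h0 hsum
      _ = ∑ i ∈ Finset.range (L + 1), 2 ^ (min (p.2 + i) (q.2 + (L + 1 - 1 - i))) := by
        rw [Finset.sum_range_succ' (fun i => 2 ^ (min (p.2 + i) (q.2 + (L + 1 - 1 - i)))) L]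
        ring

/-- Upper bound: reachability and an explicit distance bound in the horoball. -/
lemma horoball_upper (x y : V) (m n : ℕ) (hxy : x ≠ y → G.dist x y ≤ 2 ^ (Nat.clog 2 (G.dist x y))) :
    (Horoball G).Reachable (x, m) (y, n) ∧
    (Horoball G).dist (x, m) (y, n) ≤
      (max (max m n) (Nat.clog 2 (G.dist x y)) - m) +
      (max (max m n) (Nat.clog 2 (G.dist x y)) - n) + 1 := by
  set k := max (max m n) (Nat.clog 2 (G.dist x y)) with hk
  obtain ⟨w1, h1⟩ := horoball_vert_walk' G x m k (by omega)
  obtain ⟨w3, h3⟩ := horoball_vert_walk' G y n k (by omega)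
  by_cases hxy' : x = y
  · subst hxy'
    have hle := SimpleGraph.dist_le (w1.append w3.reverse)
    rw [SimpleGraph.Walk.length_append, SimpleGraph.Walk.length_reverse, h1, h3] at hle
    exact ⟨(w1.append w3.reverse).reachable, by omega⟩
  · have hadj : (Horoball G).Adj (x, k) (y, k) := by
      refine Or.inl ⟨rfl, hxy', ?_⟩
      calc G.dist x y ≤ 2 ^ Nat.clog 2 (G.dist x y) := hxy hxy'
        _ ≤ 2 ^ k := Nat.pow_le_pow_right (by norm_num) (by omega)
    have hle := SimpleGraph.dist_le (w1.append (SimpleGraph.Walk.cons hadj w3.reverse))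
    rw [SimpleGraph.Walk.length_append, SimpleGraph.Walk.length_cons,
      SimpleGraph.Walk.length_reverse, h1, h3] at hle
    exact ⟨(w1.append (SimpleGraph.Walk.cons hadj w3.reverse)).reachable, by omega⟩

end aux

/-- There is a universal constant `C` such that the horoball distance is within `C` of
`max (|m - n|, 2 log₂(1 + d(x,y)) - (m + n))`. -/
theorem horoball_dist_approx :
    ∃ C : ℝ, ∀ (V : Type) (G : SimpleGraph V), G.Connected →
      ∀ (x y : V) (m n : ℕ),
        |((Horoball G).dist (x, m) (y, n) : ℝ) -
          max |(m : ℝ) - (n : ℝ)|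
            (2 * Real.logb 2 (1 + (G.dist x y : ℝ)) - ((m : ℝ) + (n : ℝ)))| ≤ C := by
  refine ⟨10, ?_⟩
  intro V G hG x y m n
  set d := G.dist x y with hd
  obtain ⟨hreach, hupper⟩ :=
    horoball_upper G x y m n (fun _ => Nat.le_pow_clog one_lt_two _)
  obtain ⟨w, hw⟩ := hreach.exists_walk_length_eq_dist
  set L := (Horoball G).dist (x, m) (y, n) with hLdef
  -- level bound: |m - n| ≤ L
  have hlev : m ≤ n + L ∧ n ≤ m + L := by
    have := horoball_levels G w
    rw [hw] at this
    simpa using this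
  -- counting bound : (1 + d)^2 ≤ 2 ^ (m + n + L + 6)
  have hBn : (1 + d) ^ 2 ≤ 2 ^ (m + n + L + 6) := by
    have hwd := horoball_walk_dist G hG w
    simp only [hw] at hwd
    have hcb := hb_claimB m n L
    set e := (m + n + L - 1) / 2 with he
    have hd2 : d ≤ 2 ^ (e + 2) := le_trans hwd hcb
    have h1d : 1 + d ≤ 2 ^ (e + 3) := by
      have hone : 1 ≤ 2 ^ (e + 2) := Nat.one_le_two_pow
      have : (2:ℕ) ^ (e + 3) = 2 ^ (e + 2) + 2 ^ (e + 2) := by ring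
      omega
    calc (1 + d) ^ 2 ≤ (2 ^ (e + 3)) ^ 2 := Nat.pow_le_pow_left h1d 2
      _ = 2 ^ ((e + 3) * 2) := by rw [← pow_mul]
      _ ≤ 2 ^ (m + n + L + 6) := Nat.pow_le_pow_right (by norm_num) (by omega)
  -- real versions
  have hA : |(m : ℝ) - n| ≤ L := by
    rw [abs_sub_le_iff]
    have h1' := (Nat.cast_le (α := ℝ)).2 hlev.1
    have h2' := (Nat.cast_le (α := ℝ)).2 hlev.2
    push_cast at h1' h2'
    constructor <;> linarith
  have hB : 2 * Real.logb 2 (1 + (d:ℝ)) - ((m:ℝ) + n) ≤ (L:ℝ) + 6 := by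
    have hcast : ((1 + d : ℕ) : ℝ) ^ 2 ≤ ((2 : ℕ) : ℝ) ^ (m + n + L + 6) := by
      rw [← Nat.cast_pow, ← Nat.cast_pow]
      exact_mod_cast hBn
    have hpos : (0:ℝ) < ((1 + d : ℕ) : ℝ) ^ 2 := by positivity
    have hlog := Real.logb_le_logb_of_le (one_lt_two) hpos hcast
    rw [Real.logb_pow, Real.logb_pow] at hlog
    simp only [Nat.cast_ofNat, Real.logb_self_eq_one one_lt_two] at hlog
    push_cast at hlog ⊢
    linarith
  -- upper bound in ℝ
  have hupR : (L : ℝ) ≤ max |(m : ℝ) - n| (2 * Real.logb 2 (1 + (d:ℝ)) - ((m:ℝ) + n)) + 3 := by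
    rcases le_or_gt (Nat.clog 2 d) (max m n) with hc | hc
    · -- k = max m n
      have hmx : max (max m n) (Nat.clog 2 d) = max m n := by omega
      rw [hmx] at hupper
      have h1 : (L : ℝ) ≤ |(m : ℝ) - n| + 1 := by
        rcases le_total m n with hmn | hmn
        · have h2 : L ≤ (n - m) + 1 := by omega
          have h3 := (Nat.cast_le (α := ℝ)).2 h2
          push_cast [Nat.cast_sub hmn] at h3
          rw [abs_sub_comm, abs_of_nonneg (sub_nonneg.2 ((Nat.cast_le (α := ℝ)).2 hmn))]
          linarith
        · have h2 : L ≤ (m - n) + 1 := by omega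
          have h3 := (Nat.cast_le (α := ℝ)).2 h2
          push_cast [Nat.cast_sub hmn] at h3
          rw [abs_of_nonneg (sub_nonneg.2 ((Nat.cast_le (α := ℝ)).2 hmn))]
          linarith
      refine h1.trans ?_
      have := le_max_left |(m : ℝ) - n| (2 * Real.logb 2 (1 + (d:ℝ)) - ((m:ℝ) + n))
      linarith
    · -- k = clog 2 d, and clog 2 d ≥ 1 so d ≥ 2
      set K := Nat.clog 2 d with hK
      have hmx : max (max m n) K = K := by omega
      rw [hmx] at hupper
      have hK1 : 1 ≤ K := by omega
      have hd2 : 2 ≤ d := by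
        by_contra hcon
        have : K = 0 := Nat.clog_of_right_le_one (by omega) 2
        omega
      have hlt : 2 ^ (K - 1) < d := Nat.pow_pred_clog_lt_self one_lt_two (by omega)
      have hKR : (K : ℝ) ≤ Real.logb 2 (1 + (d:ℝ)) + 1 := by
        have hltR : ((2:ℝ)) ^ (K - 1) < (d:ℝ) := by exact_mod_cast hlt
        have hle1d : (d:ℝ) ≤ 1 + (d:ℝ) := by linarith
        have hlog := Real.logb_le_logb_of_le (one_lt_two)
          (by positivity : (0:ℝ) < (2:ℝ) ^ (K - 1))
          (hltR.le.trans hle1d)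
        rw [Real.logb_pow] at hlog
        simp only [Real.logb_self_eq_one one_lt_two, mul_one] at hlog
        have : ((K - 1 : ℕ) : ℝ) = (K : ℝ) - 1 := by
          have := (Nat.cast_le (α := ℝ)).2 hK1
          push_cast [Nat.cast_sub hK1]
          ring
        rw [this] at hlog
        linarith
      have hcast := (Nat.cast_le (α := ℝ)).2 hupper
      have hmK : m ≤ K := by omega
      have hnK : n ≤ K := by omega
      rw [Nat.cast_add, Nat.cast_add, Nat.cast_sub hmK, Nat.cast_sub hnK] at hcast
      push_cast at hcast
      have hle2 : (L : ℝ) ≤ 2 * Real.logb 2 (1 + (d:ℝ)) - ((m:ℝ) + n) + 3 := by linarith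
      exact hle2.trans (by
        have := le_max_right |(m : ℝ) - n| (2 * Real.logb 2 (1 + (d:ℝ)) - ((m:ℝ) + n))
        linarith)
  rw [abs_le]
  constructor
  · have h1 : |(m : ℝ) - n| ≤ (L:ℝ) + 10 := by
      have := hA; linarith
    have h2 : 2 * Real.logb 2 (1 + (d:ℝ)) - ((m:ℝ) + n) ≤ (L:ℝ) + 10 := by linarith
    have := max_le h1 h2
    linarith
  · have := le_max_left |(m : ℝ) - n| (2 * Real.logb 2 (1 + (d:ℝ)) - ((m:ℝ) + n))
    linarith
end

section
/- Let f : P → Q be a (λ, c)-quasi-isometric embedding between graphs with path metrics. Then the map F : H_P → H_Q defined by F(x, m) = (f(x), m) between the combinatorial horoballs is a quasi-isometric embedding, with constants depending only on λ and c. -/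
open SimpleGraph

private lemma hb_adj_up {V : Type} (G : SimpleGraph V) (x : V) (m : ℕ) :
    (Horoball G).Adj (x, m) (x, m + 1) := Or.inr ⟨rfl, Or.inr rfl⟩

private lemma hb_walk_up {V : Type} (G : SimpleGraph V) (x : V) (a : ℕ) :
    ∀ b, a ≤ b → ∃ w : (Horoball G).Walk (x, a) (x, b), w.length = b - a := by
  intro b hb
  induction b, hb using Nat.le_induction with
  | base => exact ⟨.nil, by simp⟩
  | succ b hb ih =>
    obtain ⟨w, hw⟩ := ih
    exact ⟨w.concat (hb_adj_up G x b), by rw [SimpleGraph.Walk.length_concat, hw]; omega⟩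

private lemma hb_walk {V : Type} (G : SimpleGraph V) (x y : V) (m n N : ℕ)
    (hm : m ≤ N) (hn : n ≤ N) (hD : G.dist x y ≤ 2 ^ N) :
    ∃ w : (Horoball G).Walk (x, m) (y, n), w.length ≤ (N - m) + (N - n) + 1 := by
  obtain ⟨w1, hw1⟩ := hb_walk_up G x m N hm
  obtain ⟨w2, hw2⟩ := hb_walk_up G y n N hn
  by_cases hxy : x = y
  · subst hxy
    exact ⟨w1.append w2.reverse, by
      simp only [SimpleGraph.Walk.length_append, SimpleGraph.Walk.length_reverse, hw1, hw2]
      omega⟩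
  · have hadj : (Horoball G).Adj (x, N) (y, N) := Or.inl ⟨rfl, hxy, hD⟩
    exact ⟨(w1.append (.cons hadj .nil)).append w2.reverse, by
      simp only [SimpleGraph.Walk.length_append, SimpleGraph.Walk.length_reverse,
        SimpleGraph.Walk.length_cons, SimpleGraph.Walk.length_nil, hw1, hw2]
      omega⟩

private lemma hb_reach {V : Type} (G : SimpleGraph V) (x y : V) (m n : ℕ) :
    (Horoball G).Reachable (x, m) (y, n) := by
  set N := max (max m n) (G.dist x y) with hN
  obtain ⟨w, -⟩ := hb_walk G x y m n N (by omega) (by omega)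
    (le_trans (by omega) (Nat.lt_two_pow_self (n := N)).le)
  exact ⟨w⟩

private lemma hb_level {V : Type} {G : SimpleGraph V} {p q : V × ℕ}
    (w : (Horoball G).Walk p q) : q.2 ≤ p.2 + w.length ∧ p.2 ≤ q.2 + w.length := by
  induction w with
  | nil => simp
  | cons h tl ih =>
    rw [SimpleGraph.Walk.length_cons]
    rcases h with ⟨h1, -, -⟩ | ⟨-, h2 | h2⟩ <;> omega

private lemma hb_lower {V : Type} {G : SimpleGraph V} (hG : G.Connected) {p q : V × ℕ}
    (w : (Horoball G).Walk p q) :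
    (G.dist p.1 q.1 : ℝ) ≤ 3 * Real.sqrt 2 ^ (w.length + p.2 + q.2) := by
  have hr2 : Real.sqrt 2 ^ 2 = 2 := Real.sq_sqrt (by norm_num)
  have hr0 : (0:ℝ) ≤ Real.sqrt 2 := Real.sqrt_nonneg 2
  have hr1 : (4:ℝ)/3 ≤ Real.sqrt 2 := by nlinarith
  have hr1' : (1:ℝ) ≤ Real.sqrt 2 := by linarith
  induction w with
  | nil => simp only [SimpleGraph.dist_self, Nat.cast_zero]; positivity
  | @cons a b c had tl ih =>
    rw [SimpleGraph.Walk.length_cons]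
    obtain ⟨hlev, hne, hd⟩ | ⟨hx, hlev⟩ := had
    · -- horizontal edge
      have hlw := hb_level tl
      have tri : G.dist a.1 c.1 ≤ G.dist a.1 b.1 + G.dist b.1 c.1 := hG.dist_triangle
      have h1 : (G.dist a.1 b.1 : ℝ) ≤ 2 ^ a.2 := by exact_mod_cast hd
      have key : (2:ℝ) ^ a.2 ≤ Real.sqrt 2 ^ (tl.length + b.2 + c.2) := by
        rw [show (2:ℝ) ^ a.2 = Real.sqrt 2 ^ (2 * a.2) by rw [pow_mul, hr2]]
        exact pow_le_pow_right₀ hr1' (by omega)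
      have hpow0 : (0:ℝ) ≤ Real.sqrt 2 ^ (tl.length + b.2 + c.2) := by positivity
      rw [show tl.length + 1 + a.2 + c.2 = (tl.length + b.2 + c.2) + 1 by omega, pow_succ]
      calc (G.dist a.1 c.1 : ℝ) ≤ (G.dist a.1 b.1 : ℝ) + (G.dist b.1 c.1 : ℝ) := by
            exact_mod_cast tri
        _ ≤ 2 ^ a.2 + 3 * Real.sqrt 2 ^ (tl.length + b.2 + c.2) := add_le_add h1 ih
        _ ≤ 3 * (Real.sqrt 2 ^ (tl.length + b.2 + c.2) * Real.sqrt 2) := by nlinarith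
    · -- vertical edge
      rw [show a.1 = b.1 from hx]
      refine le_trans ih (mul_le_mul_of_nonneg_left (pow_le_pow_right₀ hr1' ?_) (by norm_num))
      omega

private lemma hb_key {V W : Type} {G : SimpleGraph V} {G' : SimpleGraph W}
    (hG : G.Connected) (x y : V) (fx fy : W) (m n : ℕ) (mu nu : ℝ) (k : ℕ)
    (hmu : 0 ≤ mu) (hnu : 0 ≤ nu)
    (hd : (G'.dist fx fy : ℝ) ≤ mu * G.dist x y + nu)
    (hk : 3 * mu + nu ≤ 2 ^ k) :
    (Horoball G').dist (fx, m) (fy, n) ≤ (Horoball G).dist (x, m) (y, n) + (2 * k + 3) := by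
  have hr2 : Real.sqrt 2 ^ 2 = 2 := Real.sq_sqrt (by norm_num)
  have hr1' : (1:ℝ) ≤ Real.sqrt 2 := by nlinarith [Real.sqrt_nonneg 2]
  set h := (Horoball G).dist (x, m) (y, n) with hh
  obtain ⟨w, hw⟩ := (hb_reach G x y m n).exists_walk_length_eq_dist
  have lev := hb_level w
  have hD := hb_lower hG w
  dsimp only at lev hD
  rw [hw, ← hh] at lev hD
  set t := (h + m + n + 1) / 2 with ht
  have h2t : Real.sqrt 2 ^ (h + m + n) ≤ 2 ^ t := by
    have h1 : Real.sqrt 2 ^ (h + m + n) ≤ Real.sqrt 2 ^ (2 * t) :=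
      pow_le_pow_right₀ hr1' (by omega)
    rwa [pow_mul, hr2] at h1
  have hD2 : (G.dist x y : ℝ) ≤ 3 * 2 ^ t :=
    le_trans hD (by nlinarith)
  have hD' : (G'.dist fx fy : ℝ) ≤ 2 ^ (k + t) := by
    calc (G'.dist fx fy : ℝ) ≤ mu * G.dist x y + nu := hd
      _ ≤ mu * (3 * 2 ^ t) + nu * 2 ^ t :=
          add_le_add (mul_le_mul_of_nonneg_left hD2 hmu)
            (le_mul_of_one_le_right hnu (one_le_pow₀ one_le_two))
      _ = (3 * mu + nu) * 2 ^ t := by ring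
      _ ≤ 2 ^ k * 2 ^ t := mul_le_mul_of_nonneg_right hk (by positivity)
      _ = 2 ^ (k + t) := (pow_add 2 k t).symm
  have hDn : G'.dist fx fy ≤ 2 ^ (k + t) := by exact_mod_cast hD'
  set N := max (max m n) (k + t) with hN
  obtain ⟨w', hw'⟩ := hb_walk G' fx fy m n N (by omega) (by omega)
    (le_trans hDn (Nat.pow_le_pow_right (by norm_num) (by omega)))
  have hfin := le_trans (SimpleGraph.dist_le w') hw'
  omega


/-- A `(λ, c)`-quasi-isometric embedding between connected graphs (with their path
metrics) extends to a quasi-isometric embedding `F(x, m) = (f x, m)` between their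
combinatorial horoballs, with constants depending only on `λ` and `c`. -/
theorem horoball_extension_qie (lam c : ℝ) (hlam : 1 ≤ lam) (hc : 0 ≤ c) :
    ∃ lam' c' : ℝ, 1 ≤ lam' ∧ 0 ≤ c' ∧
      ∀ (V W : Type) (G : SimpleGraph V) (G' : SimpleGraph W),
        G.Connected → G'.Connected →
        ∀ f : V → W,
          (∀ x y : V,
            (1 / lam) * (G.dist x y : ℝ) - c ≤ (G'.dist (f x) (f y) : ℝ) ∧
            (G'.dist (f x) (f y) : ℝ) ≤ lam * (G.dist x y : ℝ) + c) →
          ∀ p q : V × ℕ,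
            (1 / lam') * ((Horoball G).dist p q : ℝ) - c' ≤
              ((Horoball G').dist (f p.1, p.2) (f q.1, q.2) : ℝ) ∧
            ((Horoball G').dist (f p.1, p.2) (f q.1, q.2) : ℝ) ≤
              lam' * ((Horoball G).dist p q : ℝ) + c' := by
  have hlam0 : (0:ℝ) < lam := lt_of_lt_of_le one_pos hlam
  obtain ⟨k, hk⟩ : ∃ k : ℕ, 3 * lam + lam * c ≤ 2 ^ k := by
    obtain ⟨k, hk⟩ := pow_unbounded_of_one_lt (3 * lam + lam * c) (one_lt_two (α := ℝ))
    exact ⟨k, hk.le⟩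
  refine ⟨1, 2 * (k:ℝ) + 3, le_refl 1, by positivity, ?_⟩
  intro V W G G' hG hG' f hf p q
  obtain ⟨x, m⟩ := p
  obtain ⟨y, n⟩ := q
  dsimp only
  have up : (Horoball G').dist (f x, m) (f y, n) ≤
      (Horoball G).dist (x, m) (y, n) + (2 * k + 3) := by
    refine hb_key hG x y (f x) (f y) m n lam c k (by linarith) hc (hf x y).2 ?_
    nlinarith
  have down : (Horoball G).dist (x, m) (y, n) ≤
      (Horoball G').dist (f x, m) (f y, n) + (2 * k + 3) := by
    refine hb_key hG' (f x) (f y) x y m n lam (lam * c) k (by linarith) (by positivity) ?_ hk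
    have h1 := (hf x y).1
    rw [one_div, inv_mul_eq_div] at h1
    have h3 := (div_le_iff₀ hlam0).mp
      (by linarith : (G.dist x y : ℝ) / lam ≤ (G'.dist (f x) (f y) : ℝ) + c)
    nlinarith
  have up' : ((Horoball G').dist (f x, m) (f y, n) : ℝ) ≤
      ((Horoball G).dist (x, m) (y, n) : ℝ) + (2 * (k:ℝ) + 3) := by exact_mod_cast up
  have down' : ((Horoball G).dist (x, m) (y, n) : ℝ) ≤
      ((Horoball G').dist (f x, m) (f y, n) : ℝ) + (2 * (k:ℝ) + 3) := by exact_mod_cast down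
  constructor
  · rw [one_div_one, one_mul]; linarith
  · rw [one_mul]; linarith
end

section
/- Let G be a group and ℙ = {P₁, …, P_k} a finite almost malnormal collection of subgroups, i.e. whenever P_i ∩ g P_j g⁻¹ is infinite for some g ∈ G, one has i = j and g ∈ P_i. Let H ≤ G be a subgroup of finite index. For each P ∈ ℙ choose a set T_P of representatives of the double cosets H\G/P containing 1, and set ℚ = { aPa⁻¹ ∩ H : P ∈ ℙ, a ∈ T_P }. Then ℚ is an almost malnormal collection of subgroups of H, and moreover for every g ∈ G and P ∈ ℙ there exist h ∈ H and Q ∈ ℚ with Stab_H(gP) = gPg⁻¹ ∩ H = hQh⁻¹. -/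
/-- The conjugate subgroup `g P g⁻¹`. -/
def conjSub {G : Type*} [Group G] (g : G) (P : Subgroup G) : Subgroup G :=
  P.map (MulAut.conj g).toMonoidHom

section AuxConjSub
variable {G : Type*} [Group G]

lemma mem_conjSub {g x : G} {P : Subgroup G} : x ∈ conjSub g P ↔ g⁻¹ * x * g ∈ P := by
  rw [conjSub, Subgroup.mem_map_equiv]
  simp

lemma conjSub_mul (g g' : G) (P : Subgroup G) :
    conjSub g (conjSub g' P) = conjSub (g * g') P := by
  ext x
  simp only [mem_conjSub, mul_inv_rev]
  group

lemma conjSub_inf (g : G) (A B : Subgroup G) :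
    conjSub g (A ⊓ B) = conjSub g A ⊓ conjSub g B := by
  ext x
  simp [mem_conjSub, Subgroup.mem_inf]

lemma conjSub_eq_self_of_mem {g : G} {P : Subgroup G} (hg : g ∈ P) :
    conjSub g P = P := by
  ext x
  simp only [mem_conjSub]
  constructor
  · intro hx
    have := P.mul_mem (P.mul_mem hg hx) (P.inv_mem hg)
    simpa [mul_assoc] using this
  · intro hx
    exact P.mul_mem (P.mul_mem (P.inv_mem hg) hx) hg

end AuxConjSub

/-- Induced paring of a finite-index subgroup: if `ℙ = {P₁, …, P_k}` is an almost
malnormal collection of subgroups of `G`, `H ≤ G` has finite index, and `T i` is a set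
of representatives of the double cosets `H\G/Pᵢ` containing `1`, then the collection
`ℚ = {a Pᵢ a⁻¹ ∩ H : a ∈ T i}` is almost malnormal in `H`, and every stabilizer
`Stab_H(gPᵢ) = g Pᵢ g⁻¹ ∩ H` is an `H`-conjugate of a member of `ℚ`. -/
theorem induced_paring {G : Type*} [Group G] (k : ℕ) (P : Fin k → Subgroup G)
    (hmal : ∀ (i j : Fin k) (g : G),
      ((P i ⊓ conjSub g (P j) : Subgroup G) : Set G).Infinite → i = j ∧ g ∈ P i)
    (H : Subgroup G) (hH : H.FiniteIndex)
    (T : Fin k → Set G) (hT1 : ∀ i, (1 : G) ∈ T i)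
    (hTrep : ∀ (i : Fin k) (g : G),
      ∃! a : G, a ∈ T i ∧ ∃ h ∈ H, ∃ p ∈ P i, g = h * a * p) :
    (∀ (i j : Fin k) (a b : G), a ∈ T i → b ∈ T j → ∀ h ∈ H,
      ((conjSub h (conjSub a (P i) ⊓ H) ⊓ (conjSub b (P j) ⊓ H) : Subgroup G) :
          Set G).Infinite →
        i = j ∧ a = b ∧ h ∈ conjSub a (P i) ⊓ H) ∧
    (∀ (g : G) (i : Fin k), ∃ h ∈ H, ∃ a ∈ T i,
      conjSub g (P i) ⊓ H = conjSub h (conjSub a (P i) ⊓ H)) := by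
  constructor
  · intro i j a b haT hbT h hh hinf
    -- conjugate the infinite intersection by b⁻¹
    have hmono : (fun x => b⁻¹ * x * b) ''
        ((conjSub h (conjSub a (P i) ⊓ H) ⊓ (conjSub b (P j) ⊓ H) : Subgroup G) : Set G)
        ⊆ ((P j ⊓ conjSub (b⁻¹ * h * a) (P i) : Subgroup G) : Set G) := by
      rintro _ ⟨x, hx, rfl⟩
      rw [SetLike.mem_coe, Subgroup.mem_inf] at hx ⊢
      obtain ⟨hx1, hx2⟩ := hx
      rw [Subgroup.mem_inf] at hx2
      constructor
      · have := hx2.1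
        rw [mem_conjSub] at this
        simpa [mul_assoc] using this
      · have hx1' : x ∈ conjSub (h * a) (P i) := by
          rw [← conjSub_mul]
          exact (conjSub_inf h (conjSub a (P i)) H ▸ hx1 : _).1
        rw [mem_conjSub] at hx1' ⊢
        have : (b⁻¹ * h * a)⁻¹ * (b⁻¹ * x * b) * (b⁻¹ * h * a)
            = (h * a)⁻¹ * x * (h * a) := by group
        rw [this]
        exact hx1'
    have hinf2 : ((P j ⊓ conjSub (b⁻¹ * h * a) (P i) : Subgroup G) : Set G).Infinite :=
      Set.Infinite.mono hmono
        (Set.Infinite.image (Set.injOn_of_injective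
          (fun x y hxy => by
            have := mul_right_cancel hxy
            exact mul_left_cancel this)) hinf)
    obtain ⟨hji, hmem⟩ := hmal j i (b⁻¹ * h * a) hinf2
    subst hji
    -- uniqueness of double coset representatives gives a = b
    obtain ⟨a', _, huniq⟩ := hTrep j b
    have hab : a = b := by
      have h1 : a = a' := huniq a ⟨haT, h, hh, (b⁻¹ * h * a)⁻¹, (P j).inv_mem hmem, by
        group⟩
      have h2 : b = a' := huniq b ⟨hbT, 1, H.one_mem, 1, (P j).one_mem, by group⟩
      rw [h1, h2]
    subst hab
    refine ⟨rfl, rfl, Subgroup.mem_inf.2 ⟨?_, hh⟩⟩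
    rw [mem_conjSub]
    simpa [mul_assoc] using hmem
  · intro g i
    obtain ⟨a, ⟨haT, h, hh, p, hp, hg⟩, _⟩ := hTrep i g
    refine ⟨h, hh, a, haT, ?_⟩
    rw [conjSub_inf, conjSub_mul, conjSub_eq_self_of_mem hh, hg,
      ← conjSub_mul, conjSub_eq_self_of_mem hp]
end

section
/- Let A' ≤ A ≤ G be groups with A' of finite index in A and A' separable in G. Then there exist subgroups A'' and H of G such that: (1) H is a normal subgroup of finite index in G; (2) A'' = H ∩ A' is a normal subgroup of finite index in A; (3) for all g ∈ G, (gAg⁻¹) ∩ H = gA''g⁻¹. -/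
/-- A subgroup `K ≤ G` is separable if for every `g ∉ K` there is a finite-index
subgroup of `G` containing `K` but not `g`. -/
def IsSeparable' {G : Type*} [Group G] (K : Subgroup G) : Prop :=
  ∀ g : G, g ∉ K → ∃ G' : Subgroup G, G'.FiniteIndex ∧ K ≤ G' ∧ g ∉ G'

/-- If `A' ≤ A ≤ G`, `A'` has finite index in `A` and `A'` is separable in `G`, then
there are subgroups `A''` and `H` with: `H` normal of finite index in `G`;
`A'' = H ∩ A'` normal of finite index in `A`; and `(gAg⁻¹) ∩ H = gA''g⁻¹` for all `g`. -/
theorem separable_finite_index_subgroup {G : Type*} [Group G]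
    (A A' : Subgroup G) (hle : A' ≤ A)
    (hfi : (A'.subgroupOf A).FiniteIndex) (hsep : IsSeparable' A') :
    ∃ A'' H : Subgroup G,
      (H.Normal ∧ H.FiniteIndex) ∧
      (A'' = H ⊓ A' ∧ (A''.subgroupOf A).Normal ∧ (A''.subgroupOf A).FiniteIndex) ∧
      (∀ g : G, conjSub g A ⊓ H = conjSub g A'') := by
  classical
  haveI := hfi
  -- choose for each coset a finite-index subgroup separating its representative
  set Q := A ⧸ A'.subgroupOf A
  haveI : Finite Q := Subgroup.finite_quotient_of_finiteIndex
  have choice : ∀ q : Q, ∃ G' : Subgroup G, G'.FiniteIndex ∧ A' ≤ G' ∧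
      (((Quotient.out (α := A) (s := QuotientGroup.leftRel (A'.subgroupOf A)) q) : G) ∉ A' → ((Quotient.out (α := A) (s := QuotientGroup.leftRel (A'.subgroupOf A)) q) : G) ∉ G') := by
    intro q
    by_cases h : ((Quotient.out (α := A) (s := QuotientGroup.leftRel (A'.subgroupOf A)) q) : G) ∈ A'
    · exact ⟨⊤, Subgroup.instFiniteIndexTop, le_top, fun h' => absurd h h'⟩
    · obtain ⟨G', h1, h2, h3⟩ := hsep _ h
      exact ⟨G', h1, h2, fun _ => h3⟩
  choose f hf1 hf2 hf3 using choice
  set K : Subgroup G := ⨅ q : Q, f q with hK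
  have hKfi : K.FiniteIndex := Subgroup.finiteIndex_iInf hf1
  have hA'K : A' ≤ K := le_iInf hf2
  -- key: A ∩ K ≤ A'
  have key : ∀ x : G, x ∈ A → x ∈ K → x ∈ A' := by
    intro x hxA hxK
    by_contra hx
    set q : Q := QuotientGroup.mk ⟨x, hxA⟩ with hq
    have hout : (QuotientGroup.mk (Quotient.out (α := A) (s := QuotientGroup.leftRel (A'.subgroupOf A)) q) : Q) = q := QuotientGroup.out_eq' q
    have hrel : ((Quotient.out (α := A) (s := QuotientGroup.leftRel (A'.subgroupOf A)) q))⁻¹ * ⟨x, hxA⟩ ∈ A'.subgroupOf A := by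
      rw [← QuotientGroup.eq]
      exact hout
    have hrel' : (((Quotient.out (α := A) (s := QuotientGroup.leftRel (A'.subgroupOf A)) q) : G))⁻¹ * x ∈ A' := hrel
    have houtA' : ((Quotient.out (α := A) (s := QuotientGroup.leftRel (A'.subgroupOf A)) q) : G) ∉ A' := by
      intro h
      have := A'.mul_mem h hrel'
      simp only [mul_inv_cancel_left] at this
      exact hx this
    have hxf : x ∈ f q := (iInf_le f q : K ≤ f q) hxK
    have : ((Quotient.out (α := A) (s := QuotientGroup.leftRel (A'.subgroupOf A)) q) : G) ∈ f q := by
      have h1 : (((Quotient.out (α := A) (s := QuotientGroup.leftRel (A'.subgroupOf A)) q) : G))⁻¹ * x ∈ f q := hf2 q hrel'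
      have := (f q).mul_mem hxf ((f q).inv_mem h1)
      simpa [mul_assoc] using this
    exact hf3 q houtA' this
  -- pass to the normal core
  set H : Subgroup G := K.normalCore with hH
  haveI hHn : H.Normal := Subgroup.normalCore_normal K
  haveI hHfi : H.FiniteIndex := @Subgroup.finiteIndex_normalCore _ _ K hKfi
  have hHK : H ≤ K := Subgroup.normalCore_le K
  have keyH : H ⊓ A = H ⊓ A' := by
    apply le_antisymm
    · rintro x ⟨hxH, hxA⟩
      exact ⟨hxH, key x hxA (hHK hxH)⟩
    · exact inf_le_inf_left H hle
  refine ⟨H ⊓ A', H, ⟨hHn, hHfi⟩, ⟨rfl, ?_, ?_⟩, ?_⟩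
  · -- normality: (H ⊓ A').subgroupOf A = H.subgroupOf A is normal
    have : (H ⊓ A').subgroupOf A = H.subgroupOf A := by
      rw [← keyH, Subgroup.inf_subgroupOf_right]
    rw [this]
    exact Subgroup.normal_subgroupOf
  · have : (H ⊓ A').subgroupOf A = H.subgroupOf A := by
      rw [← keyH, Subgroup.inf_subgroupOf_right]
    rw [this]
    infer_instance
  · intro g
    ext x
    simp only [conjSub, Subgroup.mem_inf, Subgroup.mem_map_equiv]
    constructor
    · rintro ⟨hxA, hxH⟩
      have hyH : (MulAut.conj g).symm x ∈ H := by
        have := hHn.conj_mem x hxH g⁻¹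
        simpa [MulAut.conj] using this
      exact ⟨hyH, key _ hxA (hHK hyH)⟩
    · rintro ⟨hyH, hyA'⟩
      refine ⟨hle hyA', ?_⟩
      have := hHn.conj_mem _ hyH g
      simpa [MulAut.conj, mul_assoc] using this
end

section
/- Let G be a group, ℙ = {P₁, …, P_n} a finite collection of subgroups, and for each j let P_j^c ⊴ P_j be a normal finite-index subgroup. Let N = ⟪P_j^c : 1 ≤ j ≤ n⟫ be the normal closure in G of the union of the P_j^c, and let π : G → G/N be the quotient map. Assume that G/N is residually finite and that π restricted to P_j has kernel exactly P_j^c (i.e. P_j/P_j^c embeds in G/N) for each j. Then there exists a normal finite-index subgroup K ⊴ G such that for every g ∈ G and every j, K ∩ g P_j g⁻¹ = g P_j^c g⁻¹. -/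
/-- A group is residually finite if every nontrivial element survives in some finite
quotient. -/
def ResiduallyFinite (Q : Type*) [Group Q] : Prop :=
  ∀ q : Q, q ≠ 1 → ∃ (F : Type) (_ : Group F) (_ : Finite F) (φ : Q →* F), φ q ≠ 1

theorem conjSub_inf_s11 {G : Type*} [Group G] (g : G) (H K : Subgroup G) :
    conjSub g (H ⊓ K) = conjSub g H ⊓ conjSub g K :=
  Subgroup.map_inf H K _ (MulAut.conj g).injective

theorem conjSub_of_normal {G : Type*} [Group G] (g : G) (K : Subgroup G) (hK : K.Normal) :
    conjSub g K = K := by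
  ext x
  simp only [conjSub, Subgroup.mem_map, MulEquiv.coe_toMonoidHom, MulAut.conj_apply]
  constructor
  · rintro ⟨y, hy, rfl⟩
    exact hK.conj_mem y hy g
  · intro hx
    exact ⟨g⁻¹ * x * g, by simpa using hK.conj_mem x hx g⁻¹, by group⟩

/-- Deep residually finite Dehn fillings give finite-index subgroups with prescribed
intersections with all conjugates of the peripheral subgroups. -/
theorem dehn_filling_finite_index {G : Type*} [Group G] (n : ℕ)
    (P Pc : Fin n → Subgroup G)
    (hle : ∀ j, Pc j ≤ P j)
    (hnormal : ∀ j, ((Pc j).subgroupOf (P j)).Normal)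
    (hfi : ∀ j, ((Pc j).subgroupOf (P j)).FiniteIndex)
    (hres : ResiduallyFinite
      (G ⧸ Subgroup.normalClosure (⋃ j, ((Pc j : Set G)))))
    (hker : ∀ j, Subgroup.normalClosure (⋃ j, ((Pc j : Set G))) ⊓ P j = Pc j) :
    ∃ K : Subgroup G, K.Normal ∧ K.FiniteIndex ∧
      ∀ (g : G) (j : Fin n), K ⊓ conjSub g (P j) = conjSub g (Pc j) := by
  classical
  set N := Subgroup.normalClosure (⋃ j, ((Pc j : Set G))) with hN
  let π : G →* G ⧸ N := QuotientGroup.mk' N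
  have hPcN : ∀ j, Pc j ≤ N := by
    intro j x hx
    exact Subgroup.subset_normalClosure (Set.mem_iUnion.2 ⟨j, hx⟩)
  -- the image of each `P j` in the quotient is finite
  have hfinim : ∀ j, Finite ((P j).map π : Subgroup (G ⧸ N)) := by
    intro j
    have hkerf : (π.comp (P j).subtype).ker = (Pc j).subgroupOf (P j) := by
      ext x
      simp only [MonoidHom.mem_ker, MonoidHom.comp_apply, Subgroup.coe_subtype,
        Subgroup.mem_subgroupOf]
      show ((x : G) : G ⧸ N) = 1 ↔ _
      rw [QuotientGroup.eq_one_iff]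
      constructor
      · intro hx
        have : (x : G) ∈ N ⊓ P j := ⟨hx, x.2⟩
        rw [hker j] at this
        exact this
      · intro hx
        exact hPcN j hx
    have : Finite ((P j) ⧸ (Pc j).subgroupOf (P j)) :=
      Subgroup.finite_quotient_of_finiteIndex
    have hfr : Finite (π.comp (P j).subtype).range := by
      have hq : Finite ((P j) ⧸ (π.comp (P j).subtype).ker) := by
        rw [hkerf]; exact this
      exact Finite.of_equiv _ (QuotientGroup.quotientKerEquivRange (π.comp (P j).subtype)).toEquiv
    have hr : (π.comp (P j).subtype).range = (P j).map π := by
      rw [MonoidHom.range_comp, Subgroup.range_subtype]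
    rwa [hr] at hfr
  -- the set of nontrivial elements in the images
  let S : Set (G ⧸ N) := ⋃ j, (((P j).map π : Subgroup (G ⧸ N)) : Set (G ⧸ N))
  have hSfin : S.Finite := Set.finite_iUnion fun j => by haveI := hfinim j; exact Set.toFinite _
  let T : Set (G ⧸ N) := {q | q ∈ S ∧ q ≠ 1}
  have hTfin : Finite T := Set.Finite.subset hSfin (fun q hq => hq.1)
  choose F instG instF φ hφ using fun q : T => hres q q.2.2
  let Φ : (G ⧸ N) →* ∀ q : T, F q := Pi.monoidHom φ
  have hΦ : ∀ q ∈ S, Φ q = 1 → q = 1 := by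
    intro q hq h1
    by_contra hne
    have hqT : q ∈ T := ⟨hq, hne⟩
    have := congrFun h1 ⟨q, hqT⟩
    exact hφ ⟨q, hqT⟩ this
  have : Finite (∀ q : T, F q) := Pi.finite
  refine ⟨(Φ.comp π).ker, MonoidHom.normal_ker _, Subgroup.finiteIndex_ker _, ?_⟩
  have key : ∀ j, (Φ.comp π).ker ⊓ P j = Pc j := by
    intro j
    apply le_antisymm
    · rintro x ⟨hxK, hxP⟩
      have hπx : π x ∈ S := Set.mem_iUnion.2 ⟨j, Subgroup.mem_map.2 ⟨x, hxP, rfl⟩⟩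
      have : π x = 1 := hΦ (π x) hπx hxK
      have hxN : x ∈ N := by rwa [← QuotientGroup.ker_mk' N, MonoidHom.mem_ker]
      rw [← hker j]
      exact ⟨hxN, hxP⟩
    · intro x hx
      refine ⟨?_, hle j hx⟩
      have hxN : x ∈ N := hPcN j hx
      have : π x = 1 := by rwa [← MonoidHom.mem_ker, QuotientGroup.ker_mk' N]
      simp [MonoidHom.mem_ker, MonoidHom.comp_apply, this]
  intro g j
  rw [← key j, conjSub_inf_s11, conjSub_of_normal g _ (MonoidHom.normal_ker _)]
end

section
/- Let G be the fundamental group of a finite graph of groups in which every edge group is trivial and every vertex group is finite (equivalently, G is a free product of finitely many finite groups and a finitely generated free group). Then for any choice, for each vertex v, of a normal subgroup G'_v ⊴ G_v (here finite vertex groups, so G'_v of finite index), there exists a normal finite-index subgroup Q ⊴ G such that Q ∩ G_v = G'_v for every vertex group G_v ≤ G. In particular, taking G'_v = {1}, G has a finite-index normal subgroup intersecting each conjugate of each vertex group trivially, i.e. a finite-index free subgroup. -/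
open Monoid

/-- The inclusion of the `i`-th vertex group `H i` into the free product
`(H₁ ∗ ⋯ ∗ H_k) ∗ F_r` of the finite groups `H i` and the free group of rank `r`
(i.e. into the fundamental group of a finite graph of finite groups with trivial
edge groups). -/
def vertexInclusion {k r : ℕ} (H : Fin k → Type) [∀ i, Group (H i)] (i : Fin k) :
    H i →* Coprod (CoprodI H) (FreeGroup (Fin r)) :=
  Coprod.inl.comp CoprodI.of

namespace FreeAux

variable {G : Type} [Group G] {A : Type} [MulAction G A]
variable {I : Type} {H : I → Type} [∀ i, Group (H i)]
variable (ι : ∀ i, H i →* G)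

def vSetoid (i : I) : Setoid A where
  r a b := ∃ h : H i, ι i h • a = b
  iseqv := by
    constructor
    · exact fun a => ⟨1, by simp⟩
    · rintro a b ⟨h, rfl⟩
      exact ⟨h⁻¹, by rw [smul_smul, ← map_mul, inv_mul_cancel, map_one, one_smul]⟩
    · rintro a b c ⟨h, rfl⟩ ⟨h', rfl⟩
      exact ⟨h' * h, by rw [map_mul, mul_smul]⟩

noncomputable def vrep (i : I) (a : A) : A :=
  (Quotient.mk (vSetoid ι i) a).out

lemma vrep_rel (i : I) (a : A) : ∃ h : H i, ι i h • vrep ι i a = a :=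
  Quotient.exact ((Quotient.mk (vSetoid ι i) a).out_eq)

lemma vrep_smul (i : I) (h : H i) (a : A) : vrep ι i (ι i h • a) = vrep ι i a := by
  unfold vrep
  congr 1
  exact Quotient.sound ⟨h⁻¹, by rw [smul_smul, ← map_mul, inv_mul_cancel, map_one, one_smul]⟩

lemma vrep_idem (i : I) (a : A) : vrep ι i (vrep ι i a) = vrep ι i a := by
  unfold vrep
  rw [Quotient.out_eq]

noncomputable def vsec (i : I) (a : A) : H i := (vrep_rel ι i a).choose

lemma vsec_spec (i : I) (a : A) : ι i (vsec ι i a) • vrep ι i a = a :=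
  (vrep_rel ι i a).choose_spec

variable (hfree : ∀ (i : I) (h : H i) (a : A), ι i h • a = a → h = 1)
include hfree

lemma vsec_unique {i : I} {a : A} {h : H i} (hh : ι i h • vrep ι i a = a) :
    h = vsec ι i a := by
  have h2 := vsec_spec ι i a
  have : ι i ((vsec ι i a)⁻¹ * h) • vrep ι i a = vrep ι i a := by
    rw [map_mul, mul_smul, hh, map_inv, inv_smul_eq_iff, h2]
  have h3 := hfree _ _ _ this
  rwa [inv_mul_eq_one, eq_comm] at h3

lemma vsec_smul (i : I) (h : H i) (a : A) : vsec ι i (ι i h • a) = h * vsec ι i a := by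
  refine (vsec_unique ι hfree ?_).symm
  rw [vrep_smul, map_mul, mul_smul, vsec_spec]

lemma vsec_of_rep {i : I} {a : A} (ha : vrep ι i a = a) : vsec ι i a = 1 := by
  refine (vsec_unique ι hfree ?_).symm
  rw [map_one, one_smul, ha]

end FreeAux

open CategoryTheory CategoryTheory.ActionCategory CategoryTheory.SingleObj
open scoped Classical

lemma map_eq_of_val_eq {M : Type} [Monoid M] {A : Type} [MulAction M A] {X : Type} [Monoid X]
    (E : ActionCategory M A ⥤ CategoryTheory.SingleObj X) {a a' b b' : ActionCategory M A}
    (f₁ : a ⟶ b) (f₂ : a' ⟶ b') (ha : a = a') (hv : f₁.val = f₂.val) :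
    E.map f₁ = E.map f₂ := by
  subst ha
  have h1 : f₁.val • a.back = b.back := f₁.2
  have h2 : f₂.val • a.back = b'.back := f₂.2
  have hb : b = b' := by
    rw [← back_coe b, ← back_coe b', ← h1, ← h2, hv]
  subst hb
  exact congrArg E.map (Subtype.ext hv)

namespace FPFree

abbrev BG (k r : ℕ) (H : Fin k → Type) [∀ i, Group (H i)] : Type :=
  Coprod (CoprodI H) (FreeGroup (Fin r))

variable {k r : ℕ} {H : Fin k → Type} [∀ i, Group (H i)]
variable {A : Type} [MulAction (BG k r H) A]

/-- Generating quiver for the action groupoid. -/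
abbrev genArrow (a b : ActionCategory (BG k r H) A) : Type :=
  (Σ i : Fin k, {h : H i // h ≠ 1 ∧
      FreeAux.vrep (vertexInclusion (r := r) H) i a.back = a.back ∧
      vertexInclusion (r := r) H i h • a.back = b.back}) ⊕
  {e : Fin r // (Coprod.inr (FreeGroup.of e) : BG k r H) • a.back = b.back}

def genHom {a b : ActionCategory (BG k r H) A} (g : genArrow a b) : a ⟶ b :=
  match g with
  | Sum.inl ⟨i, h, hp⟩ => ⟨vertexInclusion H i h, hp.2.2⟩
  | Sum.inr ⟨e, he⟩ => ⟨(Coprod.inr (FreeGroup.of e) : BG k r H), he⟩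

variable {X : Type} [Group X]

noncomputable def xval (f : ∀ a b : ActionCategory (BG k r H) A, genArrow a b → X)
    (i : Fin k) (a : A) (g : H i) : X :=
  if h1 : FreeAux.vrep (vertexInclusion (r := r) H) i a = a then
    if h2 : g = 1 then 1
    else f ⟨(), a⟩ ⟨(), vertexInclusion (r := r) H i g • a⟩ (Sum.inl ⟨i, g, h2, h1, rfl⟩)
  else 1

noncomputable def ψval (f : ∀ a b : ActionCategory (BG k r H) A, genArrow a b → X)
    (i : Fin k) (g : H i) (b : A) : X :=
  xval f i (FreeAux.vrep (vertexInclusion (r := r) H) i b)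
      (FreeAux.vsec (vertexInclusion (r := r) H) i b) *
    (xval f i (FreeAux.vrep (vertexInclusion (r := r) H) i b)
      (g⁻¹ * FreeAux.vsec (vertexInclusion (r := r) H) i b))⁻¹

noncomputable def vertHom (f : ∀ a b : ActionCategory (BG k r H) A, genArrow a b → X)
    (hfree : ∀ (i : Fin k) (h : H i) (a : A),
      vertexInclusion (r := r) H i h • a = a → h = 1)
    (i : Fin k) : H i →* (A → X) ⋊[mulAutArrow] BG k r H where
  toFun h := ⟨ψval f i h, vertexInclusion H i h⟩
  map_one' := by
    refine SemidirectProduct.ext ?_ ?_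
    · funext b
      simp [ψval, inv_one, one_mul]
    · simp
  map_mul' h h' := by
    have hmul : (⟨ψval f i h, vertexInclusion H i h⟩ : (A → X) ⋊[mulAutArrow] BG k r H) *
        ⟨ψval f i h', vertexInclusion H i h'⟩ =
        ⟨fun b => ψval f i h b * ψval f i h' ((vertexInclusion (r := r) H i h)⁻¹ • b),
          vertexInclusion H i h * vertexInclusion H i h'⟩ := rfl
    rw [hmul]
    refine SemidirectProduct.ext ?_ ?_
    · show ψval f i (h * h') = _
      funext b
      have e0 : (vertexInclusion (r := r) H i h)⁻¹ • b
          = vertexInclusion (r := r) H i h⁻¹ • b := by rw [map_inv]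
      have e1 : FreeAux.vrep (vertexInclusion (r := r) H) i
          ((vertexInclusion (r := r) H i h)⁻¹ • b)
          = FreeAux.vrep (vertexInclusion (r := r) H) i b := by
        rw [e0, FreeAux.vrep_smul]
      have e2 : FreeAux.vsec (vertexInclusion (r := r) H) i
          ((vertexInclusion (r := r) H i h)⁻¹ • b)
          = h⁻¹ * FreeAux.vsec (vertexInclusion (r := r) H) i b := by
        rw [e0, FreeAux.vsec_smul _ hfree]
      simp only [ψval, Pi.mul_apply, e1, e2, mul_inv_rev]
      simp [mul_assoc, inv_mul_cancel_left]
    · show vertexInclusion H i (h * h') = _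
      rw [map_mul]

noncomputable def freeGen (f : ∀ a b : ActionCategory (BG k r H) A, genArrow a b → X)
    (e : Fin r) : (A → X) ⋊[mulAutArrow] BG k r H :=
  ⟨fun b => f ⟨(), (Coprod.inr (FreeGroup.of e) : BG k r H)⁻¹ • b⟩ ⟨(), b⟩
      (Sum.inr ⟨e, smul_inv_smul _ _⟩),
    Coprod.inr (FreeGroup.of e)⟩

noncomputable def liftHom (f : ∀ a b : ActionCategory (BG k r H) A, genArrow a b → X)
    (hfree : ∀ (i : Fin k) (h : H i) (a : A),
      vertexInclusion (r := r) H i h • a = a → h = 1) :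
    BG k r H →* (A → X) ⋊[mulAutArrow] BG k r H :=
  Coprod.lift (CoprodI.lift (vertHom f hfree)) (FreeGroup.lift (freeGen f))

lemma liftHom_right (f : ∀ a b : ActionCategory (BG k r H) A, genArrow a b → X)
    (hfree : ∀ (i : Fin k) (h : H i) (a : A),
      vertexInclusion (r := r) H i h • a = a → h = 1) (g : BG k r H) :
    (liftHom f hfree g).right = g := by
  have : SemidirectProduct.rightHom.comp (liftHom f hfree) = MonoidHom.id (BG k r H) := by
    apply Coprod.hom_ext
    · apply CoprodI.ext_hom
      intro i
      ext h
      simp [liftHom, Coprod.lift_apply_inl, CoprodI.lift_of, vertHom, vertexInclusion]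
    · ext e
      simp [liftHom, Coprod.lift_apply_inr, freeGen]
  exact DFunLike.ext_iff.mp this g

end FPFree

namespace FPFree

variable {k r : ℕ} {H : Fin k → Type} [∀ i, Group (H i)]
variable {A : Type} [MulAction (BG k r H) A]
variable {X : Type} [Group X]

lemma xval_one (f : ∀ a b : ActionCategory (BG k r H) A, genArrow a b → X)
    (i : Fin k) (a : A) (h1 : FreeAux.vrep (vertexInclusion (r := r) H) i a = a) :
    xval f i a 1 = 1 := by
  rw [xval, dif_pos h1, dif_pos rfl]

lemma xval_ne (f : ∀ a b : ActionCategory (BG k r H) A, genArrow a b → X)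
    (i : Fin k) (a : A) (g : H i)
    (h1 : FreeAux.vrep (vertexInclusion (r := r) H) i a = a) (h2 : g ≠ 1) :
    xval f i a g =
      f ⟨(), a⟩ ⟨(), vertexInclusion (r := r) H i g • a⟩ (Sum.inl ⟨i, g, h2, h1, rfl⟩) := by
  rw [xval, dif_pos h1, dif_neg h2]

/-- The standard generating morphism at an orbit representative. -/
def stdHom (i : Fin k) (g : H i) (a : A) :
    (show ActionCategory (BG k r H) A from ⟨(), a⟩) ⟶
      (show ActionCategory (BG k r H) A from ⟨(), vertexInclusion (r := r) H i g • a⟩) :=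
  ⟨vertexInclusion H i g, rfl⟩

def stdHom₂ (i : Fin k) (g g' : H i) (a : A) :
    (show ActionCategory (BG k r H) A from ⟨(), vertexInclusion (r := r) H i g' • a⟩) ⟶
      (show ActionCategory (BG k r H) A from
        ⟨(), vertexInclusion (r := r) H i (g * g') • a⟩) :=
  ⟨vertexInclusion H i g, by
    show vertexInclusion (r := r) H i g • (vertexInclusion (r := r) H i g' • a)
        = vertexInclusion (r := r) H i (g * g') • a
    rw [smul_smul, ← map_mul]⟩

noncomputable def actionCategoryIsFreeGroupoid
    (hfree : ∀ (i : Fin k) (h : H i) (a : A),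
      vertexInclusion (r := r) H i h • a = a → h = 1) :
    IsFreeGroupoid (ActionCategory (BG k r H) A) where
  quiverGenerators := ⟨fun a b => genArrow a b⟩
  of := fun g => genHom g
  unique_lift := by
    intro X _ f
    refine ⟨uncurry (liftHom f hfree) (liftHom_right f hfree), ?_, ?_⟩
    · rintro ⟨⟨⟩, aA : A⟩ ⟨⟨⟩, bA : A⟩ (⟨i, h, hne, hrep, hsmul⟩ | ⟨e, he⟩)
      · have hb : bA = vertexInclusion (r := r) H i h • aA :=
          (show vertexInclusion (r := r) H i h • aA = bA from hsmul).symm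
        subst hb
        have hrep' : FreeAux.vrep (vertexInclusion (r := r) H) i aA = aA := hrep
        show (liftHom f hfree (vertexInclusion (r := r) H i h)).left
            (vertexInclusion (r := r) H i h • aA) = _
        have hl : liftHom f hfree (vertexInclusion (r := r) H i h) = vertHom f hfree i h := by
          simp [liftHom, vertexInclusion, Coprod.lift_apply_inl, CoprodI.lift_of]
        rw [hl]
        show ψval f i h (vertexInclusion (r := r) H i h • aA) = _
        have e1 : FreeAux.vrep (vertexInclusion (r := r) H) i
            (vertexInclusion (r := r) H i h • aA) = aA := by
          rw [FreeAux.vrep_smul, hrep']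
        have e2 : FreeAux.vsec (vertexInclusion (r := r) H) i
            (vertexInclusion (r := r) H i h • aA) = h := by
          rw [FreeAux.vsec_smul _ hfree, FreeAux.vsec_of_rep _ hfree hrep', mul_one]
        unfold ψval
        rw [e1, e2, inv_mul_cancel, xval_one f i aA hrep', inv_one, mul_one,
          xval_ne f i aA h hrep' hne]
      · have ha : (Coprod.inr (FreeGroup.of e) : BG k r H)⁻¹ • bA = aA :=
          inv_smul_eq_iff.mpr
            (show Coprod.inr (FreeGroup.of e) • aA = bA from he).symm
        subst ha
        show (liftHom f hfree (Coprod.inr (FreeGroup.of e))).left bA = _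
        have hl : liftHom f hfree (Coprod.inr (FreeGroup.of e)) = freeGen f e := by
          simp [liftHom, Coprod.lift_apply_inr]
        rw [hl]
        rfl
    · intro E hE
      have hstd : ∀ (i : Fin k) (aA : A) (g : H i),
          FreeAux.vrep (vertexInclusion (r := r) H) i aA = aA →
          E.map (stdHom i g aA) = xval f i aA g := by
        intro i aA g hrep
        by_cases hg : g = 1
        · subst hg
          rw [xval_one f i aA hrep]
          have h1 : E.map (𝟙 (show ActionCategory (BG k r H) A from ⟨(), aA⟩)) = 1 := by
            exact E.map_id _
          rw [← h1]
          refine map_eq_of_val_eq E _ _ rfl ?_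
          show vertexInclusion H i (1 : H i) = 1
          rw [map_one]
        · rw [xval_ne f i aA g hrep hg]
          exact hE (show ActionCategory (BG k r H) A from ⟨(), aA⟩)
            (show ActionCategory (BG k r H) A from
              ⟨(), vertexInclusion (r := r) H i g • aA⟩)
            (Sum.inl ⟨i, g, hg, hrep, rfl⟩)
      have hψ : ∀ (i : Fin k) (h : H i) (b : A),
          E.map (homOfPair (G := BG k r H) b (vertexInclusion (r := r) H i h))
            = ψval f i h b := by
        intro i h b
        set ρ := FreeAux.vrep (vertexInclusion (r := r) H) i b with hρ
        set s := FreeAux.vsec (vertexInclusion (r := r) H) i b with hs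
        have hrr : FreeAux.vrep (vertexInclusion (r := r) H) i ρ = ρ := by
          rw [hρ]; exact FreeAux.vrep_idem _ i b
        have hspec : vertexInclusion (r := r) H i s • ρ = b :=
          FreeAux.vsec_spec _ i b
        have hE3 : E.map (stdHom i s ρ) = xval f i ρ s := hstd i ρ s hrr
        have hE1 : E.map (stdHom i (h⁻¹ * s) ρ) = xval f i ρ (h⁻¹ * s) :=
          hstd i ρ (h⁻¹ * s) hrr
        have hE12 : E.map (stdHom i (h⁻¹ * s) ρ ≫ stdHom₂ i h (h⁻¹ * s) ρ)
            = E.map (stdHom i s ρ) := by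
          refine map_eq_of_val_eq E _ _ rfl ?_
          show vertexInclusion H i h * vertexInclusion H i (h⁻¹ * s) = vertexInclusion H i s
          rw [← map_mul, mul_inv_cancel_left]
        rw [show E.map (stdHom i (h⁻¹ * s) ρ ≫ stdHom₂ i h (h⁻¹ * s) ρ) = E.map (stdHom i (h⁻¹ * s) ρ) ≫ E.map (stdHom₂ i h (h⁻¹ * s) ρ) from E.map_comp _ _, comp_as_mul, hE1, hE3] at hE12
        have hE2 : E.map (stdHom₂ i h (h⁻¹ * s) ρ)
            = xval f i ρ s * (xval f i ρ (h⁻¹ * s))⁻¹ :=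
          eq_mul_inv_of_mul_eq hE12
        have hsrc : ((vertexInclusion (r := r) H i h)⁻¹ • b : A)
            = vertexInclusion (r := r) H i (h⁻¹ * s) • ρ := by
          rw [map_mul, mul_smul, hspec, ← map_inv]
        calc E.map (homOfPair b (vertexInclusion (r := r) H i h))
              = E.map (stdHom₂ i h (h⁻¹ * s) ρ) :=
              map_eq_of_val_eq E _ _
                (congrArg (fun z => (⟨(), z⟩ : ActionCategory (BG k r H) A)) hsrc) rfl
          _ = ψval f i h b := by rw [hE2]; rfl
      have hcurry : ActionCategory.curry E = liftHom f hfree := by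
        apply Coprod.hom_ext
        · apply CoprodI.ext_hom
          intro i
          apply MonoidHom.ext
          intro h
          simp only [MonoidHom.comp_apply]
          have hl : liftHom f hfree (Coprod.inl (CoprodI.of h)) = vertHom f hfree i h := by
            simp [liftHom, Coprod.lift_apply_inl, CoprodI.lift_of]
          rw [hl]
          refine SemidirectProduct.ext ?_ rfl
          · funext b
            exact hψ i h b
        · apply FreeGroup.ext_hom
          intro e
          simp only [MonoidHom.comp_apply]
          have hl : liftHom f hfree (Coprod.inr (FreeGroup.of e)) = freeGen f e := by
            simp [liftHom, Coprod.lift_apply_inr]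
          rw [hl]
          refine SemidirectProduct.ext ?_ rfl
          · funext b
            exact hE _ _ (Sum.inr ⟨e, smul_inv_smul _ _⟩)
      apply Functor.hext
      · intro
        apply Unit.ext
      · refine ActionCategory.cases ?_
        intros
        refine heq_of_eq ?_
        show E.map _ = (liftHom f hfree _).left _
        rw [← hcurry]
        rfl

end FPFree

namespace FPFree

variable {k r : ℕ} {H : Fin k → Type} [∀ i, Group (H i)]

/-- A normal subgroup meeting every vertex group trivially is free. -/
noncomputable def isFreeGroupOfTrivialInter (Q : Subgroup (BG k r H)) (hn : Q.Normal)
    (h0 : ∀ i, Q ⊓ Subgroup.map (vertexInclusion (r := r) H i) ⊤ = ⊥) :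
    IsFreeGroup Q := by
  have hfree : ∀ (i : Fin k) (h : H i) (a : BG k r H ⧸ Q),
      vertexInclusion (r := r) H i h • a = a → h = 1 := by
    intro i h a ha
    obtain ⟨g, rfl⟩ := QuotientGroup.mk_surjective a
    rw [MulAction.Quotient.smul_mk, QuotientGroup.eq] at ha
    have h3 : g * ((vertexInclusion (r := r) H i h * g)⁻¹ * g) * g⁻¹
        = (vertexInclusion (r := r) H i h)⁻¹ := by group
    have h4 : (vertexInclusion (r := r) H i h)⁻¹ ∈ Q := h3 ▸ hn.conj_mem _ ha g
    have h5 : vertexInclusion (r := r) H i h ∈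
        Q ⊓ Subgroup.map (vertexInclusion (r := r) H i) ⊤ :=
      ⟨Q.inv_mem_iff.mp h4, ⟨h, trivial, rfl⟩⟩
    rw [h0 i, Subgroup.mem_bot] at h5
    have hinj : Function.Injective (vertexInclusion (r := r) H i) :=
      Coprod.inl_injective.comp (CoprodI.of_injective i)
    apply hinj
    rw [h5, map_one]
  letI := actionCategoryIsFreeGroupoid (A := BG k r H ⧸ Q) hfree
  haveI : @IsConnected (ActionCategory (BG k r H) (BG k r H ⧸ Q)) Groupoid.toCategory :=
    zigzag_isConnected fun x y =>
      Relation.ReflTransGen.single <|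
        Or.inl <| nonempty_subtype.mpr (show _ from MulAction.exists_smul_eq (BG k r H) x.back y.back)
  haveI := IsFreeGroupoid.endIsFreeOfConnectedFree
    (G := ActionCategory (BG k r H) (BG k r H ⧸ Q)) (objEquiv _ _ ↑(1 : BG k r H))
  exact IsFreeGroup.ofMulEquiv
    (G := @End (ActionCategory (BG k r H) (BG k r H ⧸ Q)) Groupoid.toCategory.toCategoryStruct
      (objEquiv _ _ ↑(1 : BG k r H)))
    { (endMulEquivSubgroup Q).toEquiv with
      map_mul' := fun a b => (endMulEquivSubgroup Q).map_mul a b }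

end FPFree

/-- Part 1: the kernel of the lift to `Π i, H i ⧸ N i` works. -/
theorem part1_aux (k r : ℕ) (H : Fin k → Type) [∀ i, Group (H i)] [∀ i, Finite (H i)]
    (N : ∀ i, Subgroup (H i)) (hN : ∀ i, (N i).Normal) :
    ∃ Q : Subgroup (Coprod (CoprodI H) (FreeGroup (Fin r))),
      Q.Normal ∧ Q.FiniteIndex ∧
      ∀ i : Fin k,
        Q ⊓ Subgroup.map (vertexInclusion (r := r) H i) ⊤ =
          Subgroup.map (vertexInclusion (r := r) H i) (N i) := by
  letI : ∀ i, (N i).Normal := hN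
  let φ : Coprod (CoprodI H) (FreeGroup (Fin r)) →* (∀ i, H i ⧸ N i) :=
    Coprod.lift
      (CoprodI.lift fun i =>
        (MonoidHom.mulSingle (fun j => H j ⧸ N j) i).comp (QuotientGroup.mk' (N i))) 1
  have key : ∀ (i : Fin k) (h : H i),
      φ (vertexInclusion (r := r) H i h) = Pi.mulSingle i (QuotientGroup.mk h) := by
    intro i h
    simp [φ, vertexInclusion, Coprod.lift_apply_inl, CoprodI.lift_of]
  haveI : Finite (∀ i, H i ⧸ N i) := inferInstance
  refine ⟨φ.ker, φ.normal_ker, inferInstance, ?_⟩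
  intro i
  ext x
  simp only [Subgroup.mem_inf, Subgroup.mem_map, MonoidHom.mem_ker]
  constructor
  · rintro ⟨hker, h, -, rfl⟩
    refine ⟨h, ?_, rfl⟩
    rw [key] at hker
    have := congrFun hker i
    rw [Pi.mulSingle_eq_same, Pi.one_apply] at this
    exact (QuotientGroup.eq_one_iff h).mp this
  · rintro ⟨h, hh, rfl⟩
    refine ⟨?_, h, trivial, rfl⟩
    rw [key, (QuotientGroup.eq_one_iff h).mpr hh]
    simp

/-- Let `G = (H₁ ∗ ⋯ ∗ H_k) ∗ F_r` be a free product of finitely many finite groups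
and a finitely generated free group (equivalently, the fundamental group of a finite
graph of groups with trivial edge groups and finite vertex groups).  For any choice of
normal subgroups `N i ⊴ H i`, there is a normal finite-index subgroup `Q ⊴ G` with
`Q ∩ G_v = G'_v` for every vertex group; in particular (taking `N i = 1`) `G` has a
normal finite-index subgroup meeting every conjugate of every vertex group trivially,
which is a free group. -/
theorem finite_index_subgroup_prescribed_vertex_groups
    (k r : ℕ) (H : Fin k → Type) [∀ i, Group (H i)] [∀ i, Finite (H i)]
    (N : ∀ i, Subgroup (H i)) (hN : ∀ i, (N i).Normal) :
    (∃ Q : Subgroup (Coprod (CoprodI H) (FreeGroup (Fin r))),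
      Q.Normal ∧ Q.FiniteIndex ∧
      ∀ i : Fin k,
        Q ⊓ Subgroup.map (vertexInclusion (r := r) H i) ⊤ =
          Subgroup.map (vertexInclusion (r := r) H i) (N i)) ∧
    (∃ Q : Subgroup (Coprod (CoprodI H) (FreeGroup (Fin r))),
      Q.Normal ∧ Q.FiniteIndex ∧
      (∀ (i : Fin k) (g : Coprod (CoprodI H) (FreeGroup (Fin r))),
        Q ⊓ conjSub g (Subgroup.map (vertexInclusion (r := r) H i) ⊤) = ⊥) ∧
      ∃ S : Type, Nonempty (Q ≃* FreeGroup S)) := by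
  constructor
  · exact part1_aux k r H N hN
  · obtain ⟨Q, hn, hf, hi⟩ := part1_aux k r H (fun _ => ⊥) (fun _ => inferInstance)
    have h0 : ∀ i, Q ⊓ Subgroup.map (vertexInclusion (r := r) H i) ⊤ = ⊥ := fun i => by
      rw [hi i, Subgroup.map_bot]
    refine ⟨Q, hn, hf, ?_, ?_⟩
    · intro i g
      have hinj : Function.Injective (MulAut.conj g).toMonoidHom :=
        (MulAut.conj g).injective
      have hconjQ : conjSub g Q = Q := by
        ext x
        constructor
        · rintro ⟨q, hq, rfl⟩
          simpa [MulAut.conj_apply] using hn.conj_mem q hq g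
        · intro hx
          refine ⟨g⁻¹ * x * g, by simpa [mul_assoc] using hn.conj_mem x hx g⁻¹, ?_⟩
          show g * (g⁻¹ * x * g) * g⁻¹ = x
          group
      calc Q ⊓ conjSub g (Subgroup.map (vertexInclusion (r := r) H i) ⊤)
          = conjSub g Q ⊓ conjSub g (Subgroup.map (vertexInclusion (r := r) H i) ⊤) := by
            rw [hconjQ]
        _ = conjSub g (Q ⊓ Subgroup.map (vertexInclusion (r := r) H i) ⊤) :=
            (Subgroup.map_inf _ _ _ hinj).symm
        _ = conjSub g ⊥ := by rw [h0 i]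
        _ = ⊥ := Subgroup.map_bot _
    · haveI : IsFreeGroup Q := FPFree.isFreeGroupOfTrivialInter Q hn h0
      exact ⟨IsFreeGroup.Generators Q, ⟨IsFreeGroup.toFreeGroup Q⟩⟩
end
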